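/- Let M(ρ) = Σ_y Tr[ρπ_y]|y⟩⟨y| be a quantum-classical channel for a POVM {π_y} and orthonormal basis {|y⟩}. For any game g, U(M, g) = max over deterministic stochastic matrices S (0/1-valued matrices with exactly one 1 in each column, Σ_z S_{z,y} = 1 for all y) of Σ_x λ_max(Σ_{y,z} g_{x,z} S_{z,y} π_y), where λ_max denotes the largest eigenvalue. -/

import Mathlib

open Matrix Kronecker
open scoped ComplexOrder

noncomputable section

variable {n : Type*} [Fintype n] [DecidableEq n]

/-- A density operator: positive semidefinite with unit trace. -/
def IsDensity (ρ : Matrix n n ℂ) : Prop := ρ.PosSemidef ∧ ρ.trace = 1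

/-- A POVM: positive semidefinite effects summing to the identity. -/
def IsPOVM {m : ℕ} (π : Fin m → Matrix n n ℂ) : Prop :=
  (∀ y, (π y).PosSemidef) ∧ ∑ y, π y = 1

/-- The Choi matrix of a map on matrices. -/
def choi {p q : Type*} [Fintype p] [DecidableEq p] [Fintype q] [DecidableEq q]
    (Φ : Matrix p p ℂ → Matrix q q ℂ) : Matrix (p × q) (p × q) ℂ :=
  ∑ i, ∑ j, (Matrix.single i j (1 : ℂ)) ⊗ₖ (Φ (Matrix.single i j (1 : ℂ)))

/-- Completely positive trace preserving linear map. -/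
def IsCPTP {p q : Type*} [Fintype p] [DecidableEq p] [Fintype q] [DecidableEq q]
    (Φ : Matrix p p ℂ → Matrix q q ℂ) : Prop :=
  IsLinearMap ℂ Φ ∧ (choi Φ).PosSemidef ∧ ∀ ρ, (Φ ρ).trace = ρ.trace

/-- The average payoff of game `g`, channel `Φ`, encoding `ρ`, decoding `π`. -/
def payoff {p q : Type*} [Fintype p] [DecidableEq p] [Fintype q] [DecidableEq q]
    {nn m : ℕ} (g : Fin nn → Fin m → ℝ) (Φ : Matrix p p ℂ → Matrix q q ℂ)
    (ρ : Fin nn → Matrix p p ℂ) (π : Fin m → Matrix q q ℂ) : ℝ :=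
  ∑ x, ∑ y, ((Φ (ρ x) * π y).trace).re * g x y

/-- The communication utility of channel `Φ` for game `g`. -/
def utility {p q : Type*} [Fintype p] [DecidableEq p] [Fintype q] [DecidableEq q]
    {nn m : ℕ} (g : Fin nn → Fin m → ℝ) (Φ : Matrix p p ℂ → Matrix q q ℂ) : ℝ :=
  sSup {u : ℝ | ∃ ρ π, (∀ x, IsDensity (ρ x)) ∧ IsPOVM π ∧ u = payoff g Φ ρ π}

/-- The trace norm (sum of singular values). -/
def traceNorm (A : Matrix n n ℂ) : ℝ :=
  ∑ i, Real.sqrt ((Matrix.posSemidef_conjTranspose_mul_self A).1.eigenvalues i)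

/-- Helstrom utility of a channel for the binary discrimination game diag(g₀, 1-g₀). -/
def helstromUtility {p q : Type*} [Fintype p] [DecidableEq p] [Fintype q] [DecidableEq q]
    (Φ : Matrix p p ℂ → Matrix q q ℂ) (g₀ : ℝ) : ℝ :=
  sSup {u : ℝ | ∃ ρ₀ ρ₁, IsDensity ρ₀ ∧ IsDensity ρ₁ ∧
    u = (1 + traceNorm ((g₀ : ℂ) • Φ ρ₀ - ((1 - g₀ : ℝ) : ℂ) • Φ ρ₁)) / 2}

lemma aux_psd_diag {k : Type*} [Fintype k] [DecidableEq k] {M : Matrix k k ℂ}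
    (hM : M.PosSemidef) (y : k) : 0 ≤ M y y := by
  have := hM.diag_nonneg (i := y)
  exact this

lemma aux_psd_trace_nonneg {k : Type*} [Fintype k] [DecidableEq k] {M : Matrix k k ℂ}
    (hM : M.PosSemidef) : 0 ≤ M.trace :=
  Finset.sum_nonneg fun i _ => aux_psd_diag hM i

lemma aux_trace_mul_nonneg {k : Type*} [Fintype k] [DecidableEq k] {P Q : Matrix k k ℂ}
    (hP : P.PosSemidef) (hQ : Q.PosSemidef) : 0 ≤ (P * Q).trace := by
  obtain ⟨B, rfl⟩ : ∃ B : Matrix k k ℂ, Q = Bᴴ * B := by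
    open scoped MatrixOrder in exact CStarAlgebra.nonneg_iff_eq_star_mul_self.mp hQ.nonneg
  rw [show P * (Bᴴ * B) = (P * Bᴴ) * B by rw [Matrix.mul_assoc], Matrix.trace_mul_cycle]
  exact aux_psd_trace_nonneg (hP.mul_mul_conjTranspose_same B)

lemma aux_smul_one_sub_psd {d : ℕ} {A : Matrix (Fin d) (Fin d) ℂ} (hA : A.IsHermitian)
    {lm : ℝ} (hlm : ∀ i, hA.eigenvalues i ≤ lm) :
    ((lm : ℂ) • (1 : Matrix (Fin d) (Fin d) ℂ) - A).PosSemidef := by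
  have hU := (Matrix.mem_unitaryGroup_iff).mp (Matrix.IsHermitian.eigenvectorUnitary hA).2
  have key : (lm : ℂ) • (1 : Matrix (Fin d) (Fin d) ℂ) - A
      = (Matrix.IsHermitian.eigenvectorUnitary hA : Matrix (Fin d) (Fin d) ℂ)
        * Matrix.diagonal (fun i => ((lm - hA.eigenvalues i : ℝ) : ℂ))
        * (Matrix.IsHermitian.eigenvectorUnitary hA : Matrix (Fin d) (Fin d) ℂ)ᴴ := by
    have : Matrix.diagonal (fun i => ((lm - hA.eigenvalues i : ℝ) : ℂ))
        = (lm : ℂ) • (1 : Matrix (Fin d) (Fin d) ℂ)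
          - Matrix.diagonal (RCLike.ofReal ∘ hA.eigenvalues) := by
      funext i j
      by_cases h : i = j <;>
        simp [Matrix.diagonal_apply, h, Matrix.one_apply, Function.comp, Complex.ofReal_sub]
    rw [this, Matrix.mul_sub, Matrix.sub_mul]
    congr 1
    · rw [Matrix.mul_smul, Matrix.mul_one, Matrix.smul_mul, ← Matrix.star_eq_conjTranspose, hU]
    · conv_lhs => rw [hA.spectral_theorem]
      rw [Unitary.conjStarAlgAut_apply, Matrix.star_eq_conjTranspose]
  rw [key]
  exact (Matrix.PosSemidef.diagonal (fun i => Complex.zero_le_real.mpr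
    (by linarith [hlm i]))).mul_mul_conjTranspose_same _

lemma aux_re_trace_mul_le {d : ℕ} {A ρ : Matrix (Fin d) (Fin d) ℂ} (hA : A.IsHermitian)
    (hρ : ρ.PosSemidef) (htr : ρ.trace = 1) {lm : ℝ} (hlm : ∀ i, hA.eigenvalues i ≤ lm) :
    ((ρ * A).trace).re ≤ lm := by
  have h := aux_trace_mul_nonneg hρ (aux_smul_one_sub_psd hA hlm)
  have heq : (ρ * ((lm : ℂ) • 1 - A)).trace = (lm : ℂ) - (ρ * A).trace := by
    rw [Matrix.mul_sub, Matrix.mul_smul, Matrix.mul_one, Matrix.trace_sub, Matrix.trace_smul,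
      htr, smul_eq_mul, mul_one]
  rw [heq] at h
  have := (Complex.le_def.mp h).1
  simp only [Complex.zero_re, Complex.sub_re, Complex.ofReal_re] at this
  linarith

/-- There is a rank-one density whose payoff against Hermitian `A` is a given eigenvalue. -/
lemma aux_exists_density {d : ℕ} {A : Matrix (Fin d) (Fin d) ℂ} (hA : A.IsHermitian) (i₀ : Fin d) :
    ∃ ρ : Matrix (Fin d) (Fin d) ℂ, IsDensity ρ ∧ (ρ * A).trace = (hA.eigenvalues i₀ : ℂ) := by
  set v : Fin d → ℂ := ⇑(hA.eigenvectorBasis i₀) with hv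
  have hnorm : dotProduct (star v) v = 1 := by
    have h1 : ‖hA.eigenvectorBasis i₀‖ = 1 := hA.eigenvectorBasis.orthonormal.1 i₀
    have h2 : (inner ℂ (hA.eigenvectorBasis i₀) (hA.eigenvectorBasis i₀) : ℂ)
        = dotProduct (star v) v :=
      (EuclideanSpace.inner_eq_star_dotProduct _ _).trans (dotProduct_comm _ _)
    rw [← h2, inner_self_eq_norm_sq_to_K, h1]
    norm_num
  refine ⟨Matrix.vecMulVec v (star v), ⟨Matrix.PosSemidef.of_dotProduct_mulVec_nonneg ?_ ?_, ?_⟩, ?_⟩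
  · funext i j
    simp [Matrix.conjTranspose_apply, Matrix.vecMulVec_apply, mul_comm]
  · intro x
    have : dotProduct (star x) (Matrix.vecMulVec v (star v) *ᵥ x)
        = (dotProduct (star x) v) * star (dotProduct (star x) v) := by
      simp only [dotProduct, Matrix.mulVec, Matrix.vecMulVec_apply, star_sum,
        Finset.mul_sum, Finset.sum_mul, star_mul', Pi.star_apply, star_star]
      rw [Finset.sum_comm]
      refine Finset.sum_congr rfl fun k _ => Finset.sum_congr rfl fun j _ => by ring
    rw [this]
    exact mul_star_self_nonneg _
  · have : (Matrix.vecMulVec v (star v)).trace = dotProduct (star v) v := by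
      simp only [Matrix.trace, Matrix.diag, Matrix.vecMulVec_apply, dotProduct,
        Pi.star_apply]
      exact Finset.sum_congr rfl fun i _ => by ring
    rw [this, hnorm]
  · have htr : (Matrix.vecMulVec v (star v) * A).trace
        = dotProduct (star v) (A *ᵥ v) := by
      simp only [Matrix.trace, Matrix.diag, Matrix.mul_apply, Matrix.vecMulVec_apply,
        dotProduct, Matrix.mulVec, Pi.star_apply]
      rw [Finset.sum_comm]
      refine Finset.sum_congr rfl fun k _ => ?_
      rw [Finset.mul_sum]
      exact Finset.sum_congr rfl fun j _ => by ring
    rw [htr, hA.mulVec_eigenvectorBasis, dotProduct_smul, ← hv, hnorm]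
    simp [Complex.real_smul]

lemma aux_sum_weights {m q : ℕ} (t : Fin q → Fin m → ℝ) (hsum : ∀ y, ∑ z, t z y = 1) :
    ∑ f : Fin m → Fin q, ∏ y, t (f y) y = 1 := by
  rw [← Fintype.prod_sum (fun y z => t z y)]
  simp [hsum]

lemma aux_decomp {m q : ℕ} (t : Fin q → Fin m → ℝ) (hsum : ∀ y, ∑ z, t z y = 1)
    (y₀ : Fin m) (h : Fin q → ℝ) :
    ∑ z, t z y₀ * h z = ∑ f : Fin m → Fin q, (∏ y, t (f y) y) * h (f y₀) := by
  have key : ∀ f : Fin m → Fin q, (∏ y, t (f y) y) * h (f y₀)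
      = ∏ y, (t (f y) y * (if y = y₀ then h (f y) else 1)) := by
    intro f
    rw [Finset.prod_mul_distrib]
    congr 1
    rw [Finset.prod_ite_eq' Finset.univ y₀ (fun y => h (f y))]
    simp
  simp_rw [key]
  rw [← Fintype.prod_sum (fun y z => t z y * (if y = y₀ then h z else 1))]
  have step : (∏ y, ∑ z, t z y * (if y = y₀ then h z else 1))
      = ∏ y, (if y = y₀ then ∑ z, t z y * h z else 1) := by
    refine Finset.prod_congr rfl fun y _ => ?_
    by_cases hy : y = y₀
    · simp [hy]
    · simp [hy, hsum y]
  rw [step, Finset.prod_ite_eq' Finset.univ y₀ (fun y => ∑ z, t z y * h z)]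
  simp



lemma aux_trace_single_mul {k : ℕ} (y : Fin k) (B : Matrix (Fin k) (Fin k) ℂ) :
    (Matrix.single y y (1 : ℂ) * B).trace = B y y := by
  rw [Matrix.trace]
  rw [Finset.sum_eq_single y]
  · simp [Matrix.diag]
  · intro i _ hi
    exact Matrix.single_mul_apply_of_ne 1 y y i i hi B
  · simp

lemma aux_payoff_eq {dH nn m q : ℕ} (π : Fin m → Matrix (Fin dH) (Fin dH) ℂ)
    (M : Matrix (Fin dH) (Fin dH) ℂ → Matrix (Fin m) (Fin m) ℂ)
    (hM : ∀ ρ, M ρ = ∑ y, (ρ * π y).trace • Matrix.single y y (1 : ℂ))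
    (g : Fin nn → Fin q → ℝ) (ρ : Fin nn → Matrix (Fin dH) (Fin dH) ℂ)
    (τ : Fin q → Matrix (Fin m) (Fin m) ℂ) (hτ : ∀ z, (τ z).PosSemidef) :
    payoff g M ρ τ = ∑ x, ∑ y, ((ρ x * π y).trace).re * (∑ z, ((τ z) y y).re * g x z) := by
  unfold payoff
  refine Finset.sum_congr rfl fun x _ => ?_
  have htr : ∀ z, (M (ρ x) * τ z).trace = ∑ y, (ρ x * π y).trace * (τ z) y y := by
    intro z
    rw [hM, Finset.sum_mul, Matrix.trace_sum]
    refine Finset.sum_congr rfl fun y _ => ?_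
    rw [smul_mul_assoc, Matrix.trace_smul, smul_eq_mul, aux_trace_single_mul]
  have him : ∀ z y, ((τ z) y y).im = 0 := by
    intro z y
    have := (Complex.le_def.mp (aux_psd_diag (hτ z) y)).2
    simpa using this.symm
  have hre : ∀ z, ((M (ρ x) * τ z).trace).re
      = ∑ y, ((ρ x * π y).trace).re * ((τ z) y y).re := by
    intro z
    rw [htr z, Complex.re_sum]
    refine Finset.sum_congr rfl fun y _ => ?_
    rw [Complex.mul_re, him, mul_zero, sub_zero]
  simp_rw [hre, Finset.sum_mul]
  rw [Finset.sum_comm]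
  refine Finset.sum_congr rfl fun y _ => ?_
  rw [Finset.mul_sum]
  exact Finset.sum_congr rfl fun z _ => by ring

lemma aux_sum_rotate {α β γ : Type*} [Fintype α] [Fintype β] [Fintype γ] (h : α → β → γ → ℝ) :
    ∑ x : α, ∑ y : β, ∑ f : γ, h x y f = ∑ f : γ, ∑ x : α, ∑ y : β, h x y f := by
  have h1 : ∀ x, ∑ y : β, ∑ f : γ, h x y f = ∑ f : γ, ∑ y : β, h x y f :=
    fun x => Finset.sum_comm
  simp_rw [h1]
  exact Finset.sum_comm

/-- utility of a quantum-classical channel. -/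
theorem stmt18 {dH nn m q : ℕ} (hdH : 0 < dH) (hm : 0 < m) (hq : 0 < q)
    (π : Fin m → Matrix (Fin dH) (Fin dH) ℂ) (hπ : IsPOVM π)
    (M : Matrix (Fin dH) (Fin dH) ℂ → Matrix (Fin m) (Fin m) ℂ)
    (hM : ∀ ρ, M ρ = ∑ y, (ρ * π y).trace • Matrix.single y y (1 : ℂ))
    (g : Fin nn → Fin q → ℝ)
    (hA : ∀ (x : Fin nn) (f : Fin m → Fin q),
      (∑ y, ((g x (f y) : ℝ) : ℂ) • π y).IsHermitian) :
    utility g M = ⨆ f : Fin m → Fin q, ∑ x, ⨆ i, (hA x f).eigenvalues i := by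
  haveI : Nonempty (Fin dH) := Fin.pos_iff_nonempty.mp hdH
  haveI : Nonempty (Fin q) := Fin.pos_iff_nonempty.mp hq
  set lmax : Fin nn → (Fin m → Fin q) → ℝ := fun x f => ⨆ i, (hA x f).eigenvalues i with hlmax
  have hlmax_le : ∀ x f i, (hA x f).eigenvalues i ≤ lmax x f :=
    fun x f i => le_ciSup (Set.finite_range _).bddAbove i
  have hlmax_ex : ∀ x f, ∃ i, lmax x f = (hA x f).eigenvalues i := by
    intro x f
    obtain ⟨i, hi⟩ := Finite.exists_max (hA x f).eigenvalues
    exact ⟨i, le_antisymm (ciSup_le hi) (hlmax_le x f i)⟩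
  set F : (Fin m → Fin q) → ℝ := fun f => ∑ x, lmax x f with hFdef
  set V : ℝ := ⨆ f, F f with hVdef
  have hF_le : ∀ f, F f ≤ V := fun f => le_ciSup (Set.finite_range F).bddAbove f
  obtain ⟨f₀, hf₀max⟩ := Finite.exists_max F
  have hV : V = F f₀ := le_antisymm (ciSup_le hf₀max) (hF_le f₀)
  have hbound : ∀ u ∈ {u : ℝ | ∃ ρ τ, (∀ x, IsDensity (ρ x)) ∧ IsPOVM τ ∧ u = payoff g M ρ τ},
      u ≤ V := by
    rintro u ⟨ρ, τ, hρ, hτ, rfl⟩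
    set s : Fin nn → Fin m → ℝ := fun x y => ((ρ x * π y).trace).re with hs
    set t : Fin q → Fin m → ℝ := fun z y => ((τ z) y y).re with ht
    have htnn : ∀ z y, 0 ≤ t z y := by
      intro z y
      have := (Complex.le_def.mp (aux_psd_diag (hτ.1 z) y)).1
      simpa [ht] using this
    have htsum : ∀ y, ∑ z, t z y = 1 := by
      intro y
      have h1 : ∑ z, (τ z) y y = 1 := by
        have h2 := congrArg (fun A : Matrix (Fin m) (Fin m) ℂ => A y y) hτ.2
        simpa [Matrix.sum_apply, Matrix.one_apply] using h2
      have : (∑ z, (τ z) y y).re = (1 : ℂ).re := by rw [h1]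
      simpa [Complex.re_sum, ht] using this
    have hpay := aux_payoff_eq π M hM g ρ τ hτ.1
    set w : (Fin m → Fin q) → ℝ := fun f => ∏ y, t (f y) y with hw
    have hwnn : ∀ f, 0 ≤ w f := fun f => Finset.prod_nonneg fun y _ => htnn _ _
    have hwsum : ∑ f, w f = 1 := aux_sum_weights t htsum
    have hP : ∀ f, (∑ x, ∑ y, s x y * g x (f y)) ≤ F f := by
      intro f
      refine Finset.sum_le_sum fun x _ => ?_
      have heq : (∑ y, s x y * g x (f y))
          = ((ρ x * (∑ y, ((g x (f y) : ℝ) : ℂ) • π y)).trace).re := by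
        rw [Finset.mul_sum, Matrix.trace_sum, Complex.re_sum]
        refine Finset.sum_congr rfl fun y _ => ?_
        rw [mul_smul_comm, Matrix.trace_smul, smul_eq_mul, Complex.mul_re]
        simp [hs, mul_comm]
      rw [heq]
      exact aux_re_trace_mul_le (hA x f) (hρ x).1 (hρ x).2 (fun i => hlmax_le x f i)
    rw [hpay]
    have hswap : ∑ x, ∑ y, s x y * (∑ z, t z y * g x z)
        = ∑ f, w f * (∑ x, ∑ y, s x y * g x (f y)) := by
      have hd : ∀ x y, (∑ z, t z y * g x z) = ∑ f, w f * g x (f y) := by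
        intro x y
        exact aux_decomp t htsum y (g x)
      simp_rw [hd, Finset.mul_sum]
      rw [aux_sum_rotate]
      exact Finset.sum_congr rfl fun f _ => Finset.sum_congr rfl fun x _ =>
        Finset.sum_congr rfl fun y _ => by ring
    rw [hswap]
    calc ∑ f, w f * (∑ x, ∑ y, s x y * g x (f y)) ≤ ∑ f, w f * V :=
          Finset.sum_le_sum fun f _ =>
            mul_le_mul_of_nonneg_left ((hP f).trans (hF_le f)) (hwnn f)
      _ = V := by rw [← Finset.sum_mul, hwsum, one_mul]
  have hach : V ∈ {u : ℝ | ∃ ρ τ, (∀ x, IsDensity (ρ x)) ∧ IsPOVM τ ∧ u = payoff g M ρ τ} := by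
    choose i₀ hi₀ using hlmax_ex
    choose ρ hρd hρtr using fun x => aux_exists_density (hA x f₀) (i₀ x f₀)
    set τ : Fin q → Matrix (Fin m) (Fin m) ℂ :=
      fun z => Matrix.diagonal (fun y => if f₀ y = z then 1 else 0) with hτdef
    have hτpsd : ∀ z, (τ z).PosSemidef := by
      intro z
      refine Matrix.PosSemidef.diagonal fun y => ?_
      dsimp only
      split_ifs
      · exact zero_le_one
      · exact le_refl 0
    have hτpovm : IsPOVM τ := by
      refine ⟨hτpsd, ?_⟩
      funext i j
      by_cases hij : i = j
      · subst hij
        simp [hτdef, Matrix.sum_apply, Matrix.diagonal_apply, Matrix.one_apply]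
      · simp [hτdef, Matrix.sum_apply, Matrix.diagonal_apply, Matrix.one_apply, hij]
    refine ⟨ρ, τ, hρd, hτpovm, ?_⟩
    rw [aux_payoff_eq π M hM g ρ τ hτpsd]
    have hτdiag : ∀ z y, ((τ z) y y).re = if f₀ y = z then 1 else 0 := by
      intro z y
      by_cases hz : f₀ y = z <;> simp [hτdef, Matrix.diagonal_apply, hz]
    have hcol : ∀ (x : Fin nn) y, (∑ z, ((τ z) y y).re * g x z) = g x (f₀ y) := by
      intro x y
      simp_rw [hτdiag]
      rw [Finset.sum_eq_single (f₀ y)]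
      · simp
      · intro z _ hz
        simp [Ne.symm hz]
      · simp
    simp_rw [hcol]
    have hterm : ∀ x : Fin nn, (∑ y, ((ρ x * π y).trace).re * g x (f₀ y)) = lmax x f₀ := by
      intro x
      have heq : (∑ y, ((ρ x * π y).trace).re * g x (f₀ y))
          = ((ρ x * (∑ y, ((g x (f₀ y) : ℝ) : ℂ) • π y)).trace).re := by
        rw [Finset.mul_sum, Matrix.trace_sum, Complex.re_sum]
        refine Finset.sum_congr rfl fun y _ => ?_
        rw [mul_smul_comm, Matrix.trace_smul, smul_eq_mul, Complex.mul_re]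
        simp [mul_comm]
      rw [heq, hρtr x, hi₀ x f₀]
      simp
    rw [hV, hFdef]
    exact (Finset.sum_congr rfl fun x _ => hterm x).symm
  have hbdd : BddAbove {u : ℝ | ∃ ρ τ, (∀ x, IsDensity (ρ x)) ∧ IsPOVM τ ∧ u = payoff g M ρ τ} :=
    ⟨V, hbound⟩
  exact le_antisymm (csSup_le ⟨V, hach⟩ hbound) (le_csSup hbdd hach)

end
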